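/- Let V be a finite-dimensional vector space over a field F and let A : V → V be a nilpotent linear operator. Then there exists a unique finite decreasing filtration V^{≥i} (indexed by integers, with V^{≥i} = V for i sufficiently small and V^{≥i} = 0 for i sufficiently large) such that (i) A maps V^{≥i} into V^{≥i+2} for all i, and (ii) for every l ≥ 0, the map A^l induces an isomorphism V^{≥l}/V^{≥l+1} ≅ V^{≥-l}/V^{≥-l+1}. -/

import Mathlib

/-- `W` is a Deligne (weight) filtration for the nilpotent operator `A`:
a decreasing, exhaustive and separated ℤ-indexed filtration such that `A` has
degree `2` and `A ^ l` induces an isomorphism on graded pieces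
`W^{≥ -l}/W^{≥ -l+1} ≅ W^{≥ l}/W^{≥ l+1}` for every `l ≥ 0`. -/
def IsDeligneFiltration {F : Type*} [Field F] {V : Type*} [AddCommGroup V] [Module F V]
    (A : Module.End F V) (W : ℤ → Submodule F V) : Prop :=
  -- decreasing
  (∀ i j : ℤ, i ≤ j → W j ≤ W i) ∧
  -- finite: `W i = V` for `i` small enough and `W i = 0` for `i` large enough
  (∃ N : ℤ, (∀ i : ℤ, i ≤ -N → W i = ⊤) ∧ (∀ i : ℤ, N ≤ i → W i = ⊥)) ∧
  -- `A` has degree 2 with respect to the filtration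
  (∀ i : ℤ, (W i).map A ≤ W (i + 2)) ∧
  -- for every `l ≥ 0`, `A ^ l` induces an isomorphism
  -- `W^{≥ -l}/W^{≥ -l+1} ≅ W^{≥ l}/W^{≥ l+1}`:
  (∀ l : ℕ,
    -- surjectivity of the induced map on graded pieces
    (∀ v, v ∈ W (l : ℤ) → ∃ u ∈ W (-(l : ℤ)), v - (A ^ l) u ∈ W ((l : ℤ) + 1)) ∧
    -- injectivity of the induced map on graded pieces
    (∀ u, u ∈ W (-(l : ℤ)) → (A ^ l) u ∈ W ((l : ℤ) + 1) → u ∈ W (-(l : ℤ) + 1)))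

namespace DeligneAux

variable {F : Type*} [Field F] {V : Type*} [AddCommGroup V] [Module F V]
variable {A : Module.End F V} {W : ℤ → Submodule F V}

theorem pow_map_le (hW : IsDeligneFiltration A W) (l : ℕ) (i : ℤ) :
    (W i).map (A ^ l) ≤ W (i + 2 * l) := by
  induction l with
  | zero =>
      rw [pow_zero, Module.End.one_eq_id, Submodule.map_id]
      exact hW.1 _ _ (by omega)
  | succ l ih =>
      have h1 : A ^ (l + 1) = A * A ^ l := by rw [← pow_succ']
      rw [h1, Module.End.mul_eq_comp, Submodule.map_comp]
      have h2 := (Submodule.map_mono ih).trans (hW.2.2.1 (i + 2 * l))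
      have h3 : i + 2 * l + 2 = i + 2 * (l + 1 : ℕ) := by push_cast; ring
      rwa [h3] at h2

theorem pow_mem (hW : IsDeligneFiltration A W) (l : ℕ) {i : ℤ} {v : V} (hv : v ∈ W i) :
    (A ^ l) v ∈ W (i + 2 * l) :=
  pow_map_le hW l i (Submodule.mem_map_of_mem hv)

theorem top_of (hW : IsDeligneFiltration A W) {m : ℕ} (hA : A ^ m = 0) :
    ∀ i : ℤ, i ≤ 1 - m → W i = ⊤ := by
  have key : ∀ k : ℕ, W (1 - m - k) = W (1 - m) := by
    intro k
    induction k with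
    | zero => norm_num
    | succ k ih =>
        have h0 : A ^ (m + k) = 0 := by rw [pow_add, hA, zero_mul]
        have hinj := (hW.2.2.2 (m + k)).2
        refine le_antisymm ?_ ?_
        · intro u hu
          have := hinj u (by convert hu using 2; omega)
            (by rw [h0]; exact (W _).zero_mem)
          rw [← ih]
          convert this using 2
          omega
        · rw [← ih]
          exact hW.1 _ _ (by omega)
  obtain ⟨N, hN1, hN2⟩ := hW.2.1
  have htop : W (1 - m) = ⊤ := by
    set k : ℕ := (N + m + 1).toNat with hk
    have hk' : (N + m + 1 : ℤ) ≤ k := Int.self_le_toNat _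
    rw [← key k]
    exact hN1 _ (by omega)
  intro i hi
  exact le_antisymm le_top (htop ▸ hW.1 _ _ hi)

theorem bot_of (hW : IsDeligneFiltration A W) {m : ℕ} (hA : A ^ m = 0) :
    ∀ i : ℤ, (m : ℤ) ≤ i → W i = ⊥ := by
  have key : ∀ k : ℕ, W ((m : ℤ) + k) = W m := by
    intro k
    induction k with
    | zero => norm_num
    | succ k ih =>
        have h0 : A ^ (m + k) = 0 := by rw [pow_add, hA, zero_mul]
        have hsurj := (hW.2.2.2 (m + k)).1
        refine le_antisymm ?_ ?_
        · rw [← ih]; exact hW.1 _ _ (by omega)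
        · rw [← ih]
          intro v hv
          have e1 : ((m + k : ℕ) : ℤ) = (m : ℤ) + ((k + 1 : ℕ) : ℤ) - 1 := by push_cast; ring
          have e2 : ((m + k : ℕ) : ℤ) + 1 = (m : ℤ) + ((k + 1 : ℕ) : ℤ) := by push_cast; ring
          obtain ⟨u, _, hu2⟩ := hsurj v (by rw [e1]; exact hW.1 _ _ (by omega) hv)
          rw [h0] at hu2
          simp only [LinearMap.zero_apply, sub_zero] at hu2
          rw [← e2]
          exact hu2
  obtain ⟨N, hN1, hN2⟩ := hW.2.1
  have hbot : W m = ⊥ := by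
    set k : ℕ := (N - m).toNat with hk
    have hk' : (N - m : ℤ) ≤ k := Int.self_le_toNat _
    rw [← key k]
    exact hN2 _ (by omega)
  intro i hi
  exact le_antisymm (hbot ▸ hW.1 _ _ hi) bot_le

theorem ker_le (hW : IsDeligneFiltration A W) {m : ℕ} (hA : A ^ (m + 1) = 0) :
    LinearMap.ker (A ^ m) ≤ W (1 - m) := by
  intro u hu
  have h1 : u ∈ W (-(m : ℤ)) := by
    rw [top_of hW hA (-(m:ℤ)) (by omega)]; trivial
  have := (hW.2.2.2 m).2 u h1 (by
    rw [LinearMap.mem_ker] at hu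
    rw [hu]; exact (W _).zero_mem)
  convert this using 2
  omega

theorem le_ker (hW : IsDeligneFiltration A W) {m : ℕ} (hA : A ^ (m + 1) = 0) :
    W (1 - m) ≤ LinearMap.ker (A ^ m) := by
  intro u hu
  have h1 := pow_mem hW m hu
  rw [bot_of hW hA (1 - m + 2 * m) (by omega)] at h1
  simpa using h1

theorem ker_eq (hW : IsDeligneFiltration A W) {m : ℕ} (hA : A ^ (m + 1) = 0) :
    W (1 - m) = LinearMap.ker (A ^ m) :=
  le_antisymm (le_ker hW hA) (ker_le hW hA)

theorem range_le (hW : IsDeligneFiltration A W) {m : ℕ} (hA : A ^ (m + 1) = 0) :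
    LinearMap.range (A ^ m) ≤ W m := by
  rintro v ⟨u, rfl⟩
  have h1 : u ∈ W (-(m : ℤ)) := by
    rw [top_of hW hA (-(m:ℤ)) (by omega)]; trivial
  have := pow_mem hW m h1
  convert this using 2
  omega

theorem le_range (hW : IsDeligneFiltration A W) {m : ℕ} (hA : A ^ (m + 1) = 0) :
    W m ≤ LinearMap.range (A ^ m) := by
  intro v hv
  obtain ⟨u, _, hu2⟩ := (hW.2.2.2 m).1 v hv
  rw [bot_of hW hA ((m : ℤ) + 1) (by omega), Submodule.mem_bot, sub_eq_zero] at hu2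
  exact ⟨u, hu2.symm⟩

theorem range_eq (hW : IsDeligneFiltration A W) {m : ℕ} (hA : A ^ (m + 1) = 0) :
    W m = LinearMap.range (A ^ m) :=
  le_antisymm (le_range hW hA) (range_le hW hA)

end DeligneAux

namespace DeligneAux

variable {F : Type*} [Field F] {V : Type*} [AddCommGroup V] [Module F V]

theorem deligne_of_zero (A : Module.End F V) (hA : A = 0) :
    ∃! W : ℤ → Submodule F V, IsDeligneFiltration A W := by
  classical
  set W0 : ℤ → Submodule F V := fun i => if i ≤ 0 then ⊤ else ⊥ with hW0
  have hA1 : A ^ 1 = 0 := by rw [pow_one, hA]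
  refine ⟨W0, ⟨?_, ⟨1, ?_, ?_⟩, ?_, ?_⟩, ?_⟩
  · intro i j hij
    by_cases hi : i ≤ 0
    · simp [W0, hi]
    · have hj : ¬ j ≤ 0 := by omega
      simp [W0, hi, hj]
  · intro i hi; simp [W0, show i ≤ 0 by omega]
  · intro i hi; simp [W0, show ¬ i ≤ 0 by omega]
  · intro i
    rw [hA]
    rintro v ⟨u, hu, rfl⟩
    simp only [LinearMap.zero_apply]
    exact (W0 (i + 2)).zero_mem
  · intro l
    constructor
    · intro v hv
      rcases Nat.eq_zero_or_pos l with hl | hl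
      · subst hl
        refine ⟨v, by simpa [W0] using hv, ?_⟩
        simp only [pow_zero, Module.End.one_apply, sub_self]
        exact (W0 _).zero_mem
      · have : ¬ ((l : ℤ) ≤ 0) := by omega
        simp only [W0, this, if_neg, Submodule.mem_bot] at hv
        refine ⟨0, ?_, ?_⟩
        · simp [W0, show -(l:ℤ) ≤ 0 by omega]
        · rw [hv]
          simp only [map_zero, sub_zero]
          exact (W0 _).zero_mem
    · intro u hu hu2
      rcases Nat.eq_zero_or_pos l with hl | hl
      · subst hl
        simp only [pow_zero, Module.End.one_apply] at hu2
        simpa using hu2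
      · simp [W0, show -(l:ℤ) + 1 ≤ 0 by omega]
  · intro W hW
    funext i
    by_cases hi : i ≤ 0
    · rw [top_of hW hA1 i (by push_cast; omega)]
      simp [W0, hi]
    · rw [bot_of hW hA1 i (by push_cast; omega)]
      simp [W0, hi]

end DeligneAux

section Key
universe u v
variable {F : Type u} [Field F]

open DeligneAux

set_option maxHeartbeats 1000000 in
theorem deligne_key : ∀ (n : ℕ) {V : Type v} [AddCommGroup V] [Module F V] [FiniteDimensional F V]
    (A : Module.End F V), A ^ n = 0 →
    ∃! W : ℤ → Submodule F V, IsDeligneFiltration A W := by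
  intro n
  induction n using Nat.strong_induction_on with
  | _ n IH =>
    intro V _ _ _ A hA
    match n, hA, IH with
    | 0, hA, _ => exact deligne_of_zero A (by
        have h1 : (1 : Module.End F V) = 0 := by simpa using hA
        calc A = A * 1 := (mul_one A).symm
        _ = 0 := by rw [h1, mul_zero])
    | 1, hA, _ => exact deligne_of_zero A (by rwa [pow_one] at hA)
    | (m + 2), hA, IH =>
      classical
      -- Setup
      set K : Submodule F V := LinearMap.ker (A ^ (m + 1)) with hKdef
      have hcomm : ∀ (k : ℕ) (v : V), (A ^ k) (A v) = A ((A ^ k) v) := by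
        intro k v
        rw [← Module.End.mul_apply, ← pow_succ, pow_succ', Module.End.mul_apply]
      have hAK : ∀ x ∈ K, A x ∈ K := by
        intro x hx
        simp only [hKdef, LinearMap.mem_ker] at *
        rw [hcomm, ← Module.End.mul_apply, ← pow_succ', hA, LinearMap.zero_apply]
      have hAKpow : ∀ (l : ℕ), ∀ x ∈ K, (A ^ l) x ∈ K := by
        intro l
        exact fun x hx => Module.End.pow_apply_mem_of_forall_mem l hAK x hx
      set I : Submodule F V := LinearMap.range (A ^ (m + 1)) with hIdef
      have hIK : I ≤ K := by
        rintro _ ⟨w, rfl⟩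
        simp only [hKdef, LinearMap.mem_ker, ← Module.End.mul_apply, ← pow_add]
        have : A ^ (m + 1 + (m + 1)) = 0 := by
          obtain ⟨k, hk⟩ : ∃ k, m + 1 + (m + 1) = (m + 2) + k := ⟨m, by omega⟩
          rw [hk, pow_add, hA, zero_mul]
        rw [this, LinearMap.zero_apply]
      set J : Submodule F K := I.comap K.subtype with hJdef
      have hJmem : ∀ x : K, x ∈ J ↔ (x : V) ∈ I := fun x => Iff.rfl
      have hJle : J ≤ J.comap (A.restrict hAK) := by
        intro x hx
        rw [Submodule.mem_comap, hJmem, LinearMap.restrict_coe_apply]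
        obtain ⟨w, hw⟩ := (hJmem x).mp hx
        exact ⟨A w, by rw [hcomm, hw]⟩
      set A' : Module.End F (K ⧸ J) := Submodule.mapQ J J (A.restrict hAK) hJle with hA'def
      have hApow : ∀ (l : ℕ) (x : K), (A' ^ l) (J.mkQ x) = J.mkQ ⟨(A ^ l) ↑x, hAKpow l ↑x x.2⟩ := by
        intro l
        induction l with
        | zero => intro x; simp
        | succ l ih =>
            intro x
            rw [pow_succ', Module.End.mul_apply, ih]
            have h1 : A' (J.mkQ ⟨(A ^ l) ↑x, hAKpow l ↑x x.2⟩)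
                = J.mkQ (A.restrict hAK ⟨(A ^ l) ↑x, hAKpow l ↑x x.2⟩) := by
              rw [hA'def, Submodule.mkQ_apply, Submodule.mkQ_apply, Submodule.mapQ_apply]
            rw [h1]
            refine congrArg _ (Subtype.ext ?_)
            rw [LinearMap.restrict_coe_apply]
            show A ((A ^ l) ↑x) = (A ^ (l + 1)) ↑x
            rw [pow_succ', Module.End.mul_apply]
      have hA'nil : A' ^ (m + 1) = 0 := by
        apply LinearMap.ext
        intro q
        obtain ⟨x, rfl⟩ := J.mkQ_surjective q
        rw [hApow]
        have hx0 : (A ^ (m + 1)) ↑x = 0 := x.2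
        simp only [LinearMap.zero_apply]
        rw [show (⟨(A ^ (m+1)) ↑x, hAKpow (m+1) ↑x x.2⟩ : K) = 0 from Subtype.ext hx0, map_zero]
      obtain ⟨W', hW'D, hW'u⟩ := IH (m + 1) (by omega) A' hA'nil
      -- the pullback operation
      set P : Submodule F (K ⧸ J) → Submodule F V := fun X => (X.comap J.mkQ).map K.subtype
        with hPdef
      have hPmono : Monotone P := fun X Y hXY =>
        Submodule.map_mono (Submodule.comap_mono hXY)
      have hPmem : ∀ (X : Submodule F (K ⧸ J)) (v : V),
          v ∈ P X ↔ ∃ hv : v ∈ K, J.mkQ ⟨v, hv⟩ ∈ X := by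
        intro X v
        constructor
        · rintro ⟨⟨w, hw⟩, h1, rfl⟩
          exact ⟨hw, h1⟩
        · rintro ⟨hv, h⟩
          exact ⟨⟨v, hv⟩, h, rfl⟩
      have hPtop : P ⊤ = K := by
        rw [hPdef]; simp
      have hPbot : P ⊥ = I := by
        rw [hPdef]
        simp only [Submodule.comap_bot, Submodule.ker_mkQ, hJdef]
        rw [Submodule.map_comap_subtype]
        exact inf_eq_right.mpr hIK
      -- facts about W'
      have hW't : ∀ i : ℤ, i ≤ -(m : ℤ) → W' i = ⊤ := fun i hi =>
        top_of hW'D hA'nil i (by push_cast; omega)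
      have hW'b : ∀ i : ℤ, (m : ℤ) + 1 ≤ i → W' i = ⊥ := fun i hi =>
        bot_of hW'D hA'nil i (by push_cast; omega)
      have hW'ker : LinearMap.ker (A' ^ m) ≤ W' (1 - m) := ker_le hW'D hA'nil
      have hW'range : W' m ≤ LinearMap.range (A' ^ m) := le_range hW'D hA'nil
      -- the constructed filtration
      set Wc : ℤ → Submodule F V := fun i =>
        if i ≤ -(m : ℤ) - 1 then ⊤ else if (m : ℤ) + 1 < i then ⊥ else P (W' i) with hWcdef
      have hWc_top : ∀ i : ℤ, i ≤ -(m : ℤ) - 1 → Wc i = ⊤ := by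
        intro i hi; simp only [hWcdef]; rw [if_pos hi]
      have hWc_bot : ∀ i : ℤ, (m : ℤ) + 1 < i → Wc i = ⊥ := by
        intro i hi; simp only [hWcdef]
        rw [if_neg (by omega), if_pos hi]
      have hWc_mid : ∀ i : ℤ, -(m : ℤ) ≤ i → i ≤ (m : ℤ) + 1 → Wc i = P (W' i) := by
        intro i h1 h2; simp only [hWcdef]
        rw [if_neg (by omega), if_neg (by omega)]
      have hWcK : Wc (-(m : ℤ)) = K := by
        rw [hWc_mid _ le_rfl (by omega), hW't _ le_rfl, hPtop]
      have hWcI : Wc ((m : ℤ) + 1) = I := by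
        rw [hWc_mid _ (by omega) le_rfl, hW'b _ le_rfl, hPbot]
      -- decreasing
      have hdec : ∀ i j : ℤ, i ≤ j → Wc j ≤ Wc i := by
        intro i j hij
        by_cases hi : i ≤ -(m : ℤ) - 1
        · rw [hWc_top _ hi]; exact le_top
        by_cases hj : (m : ℤ) + 1 < j
        · rw [hWc_bot _ hj]; exact bot_le
        · push_neg at hi hj
          rw [hWc_mid i (by omega) (by omega), hWc_mid j (by omega) hj]
          exact hPmono (hW'D.1 i j hij)
      -- degree 2
      have hApow1 : ∀ (v : V) (hv : v ∈ K), A' (J.mkQ ⟨v, hv⟩) = J.mkQ ⟨A v, hAK v hv⟩ := by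
        intro v hv
        have := hApow 1 ⟨v, hv⟩
        rw [pow_one] at this
        rw [this]
        exact congrArg _ (Subtype.ext (by simp))
      have hdeg : ∀ i : ℤ, (Wc i).map A ≤ Wc (i + 2) := by
        intro i x hx
        rw [Submodule.mem_map] at hx
        obtain ⟨v, hv, rfl⟩ := hx
        by_cases h1 : i + 2 ≤ -(m : ℤ) - 1
        · rw [hWc_top _ h1]; trivial
        by_cases h2 : (m : ℤ) + 1 < i + 2
        · rw [hWc_bot _ h2, Submodule.mem_bot]
          by_cases hi1 : i ≤ -(m : ℤ) - 1
          · exact absurd hi1 (by omega)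
          by_cases hi2 : (m : ℤ) + 1 < i
          · rw [hWc_bot _ hi2, Submodule.mem_bot] at hv
            rw [hv, map_zero]
          · push_neg at hi1 hi2
            rw [hWc_mid _ (by omega) hi2, hPmem] at hv
            obtain ⟨hvK, hq⟩ := hv
            rcases (by omega : i = (m : ℤ) ∨ i = (m : ℤ) + 1) with h | h
            · subst h
              obtain ⟨q, hq2⟩ := hW'range hq
              obtain ⟨u, rfl⟩ := J.mkQ_surjective q
              rw [hApow] at hq2
              have hd : (A ^ m) ↑u - v ∈ I := by
                rw [Submodule.mkQ_apply, Submodule.mkQ_apply, Submodule.Quotient.eq] at hq2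
                have h7 := (hJmem _).mp hq2
                rwa [AddSubgroupClass.coe_sub] at h7
              obtain ⟨w, hw⟩ := hd
              have hv_eq : v = (A ^ m) ↑u - (A ^ (m + 1)) w := by
                rw [hw]; abel
              have e1 : A ((A ^ m) ↑u) = 0 := by
                rw [← Module.End.mul_apply, ← pow_succ']
                exact u.2
              have e2 : A ((A ^ (m + 1)) w) = 0 := by
                rw [← Module.End.mul_apply, ← pow_succ', hA, LinearMap.zero_apply]
              rw [hv_eq, map_sub, e1, e2, sub_zero]
            · subst h
              rw [hW'b _ le_rfl, Submodule.mem_bot, Submodule.mkQ_apply,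
                Submodule.Quotient.mk_eq_zero] at hq
              obtain ⟨w, hw⟩ := (hJmem _).mp hq
              have hwv : (A ^ (m + 1)) w = v := hw
              rw [← hwv, ← Module.End.mul_apply, ← pow_succ', hA, LinearMap.zero_apply]
        · push_neg at h1 h2
          rw [hWc_mid _ (by omega) h2, hPmem]
          have hAvK : A v ∈ K := by
            rw [hKdef, LinearMap.mem_ker, hcomm, ← Module.End.mul_apply, ← pow_succ', hA,
              LinearMap.zero_apply]
          refine ⟨hAvK, ?_⟩
          by_cases hi1 : i ≤ -(m : ℤ) - 1
          · rcases (by omega : i + 2 = -(m : ℤ) ∨ i + 2 = -(m : ℤ) + 1) with h | h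
            · rw [h, hW't _ le_rfl]; trivial
            · rw [h]
              have h1m : -(m : ℤ) + 1 = 1 - (m : ℤ) := by ring
              rw [h1m]
              refine hW'ker ?_
              rw [LinearMap.mem_ker]
              have hx := hApow m ⟨A v, hAvK⟩
              rw [hx, Submodule.mkQ_apply, Submodule.Quotient.mk_eq_zero]
              rw [hJmem]
              exact ⟨v, by rw [pow_succ, Module.End.mul_apply]⟩
          by_cases hi2 : (m : ℤ) + 1 < i
          · exact absurd hi2 (by omega)
          · push_neg at hi1 hi2
            rw [hWc_mid _ (by omega) hi2, hPmem] at hv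
            obtain ⟨hvK, hq⟩ := hv
            have h3 := hW'D.2.2.1 i (Submodule.mem_map_of_mem hq)
            rwa [hApow1 v hvK] at h3
      -- graded pieces
      have hgr : ∀ l : ℕ,
          (∀ v, v ∈ Wc (l : ℤ) → ∃ u ∈ Wc (-(l : ℤ)), v - (A ^ l) u ∈ Wc ((l : ℤ) + 1)) ∧
          (∀ u, u ∈ Wc (-(l : ℤ)) → (A ^ l) u ∈ Wc ((l : ℤ) + 1) → u ∈ Wc (-(l : ℤ) + 1)) := by
        intro l
        by_cases hl : l ≤ m
        · have hsurj' := (hW'D.2.2.2 l).1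
          have hinj' := (hW'D.2.2.2 l).2
          constructor
          · intro v hv
            rw [hWc_mid _ (by omega) (by omega), hPmem] at hv
            obtain ⟨hvK, hq⟩ := hv
            obtain ⟨q, hq1, hq2⟩ := hsurj' _ hq
            obtain ⟨u, rfl⟩ := J.mkQ_surjective q
            refine ⟨↑u, ?_, ?_⟩
            · rw [hWc_mid _ (by omega) (by omega), hPmem]
              refine ⟨u.2, ?_⟩
              rwa [Subtype.coe_eta]
            · rw [hWc_mid _ (by omega) (by omega), hPmem]
              have hK' : v - (A ^ l) ↑u ∈ K := K.sub_mem hvK (hAKpow l ↑u u.2)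
              refine ⟨hK', ?_⟩
              have heq : J.mkQ ⟨v - (A ^ l) ↑u, hK'⟩ = J.mkQ ⟨v, hvK⟩ - (A' ^ l) (J.mkQ u) := by
                rw [hApow, ← map_sub]
                exact congrArg _ (Subtype.ext (by simp))
              rw [heq]
              exact hq2
          · intro u hu hu2
            rw [hWc_mid _ (by omega) (by omega), hPmem] at hu
            obtain ⟨huK, hq⟩ := hu
            rw [hWc_mid _ (by omega) (by omega), hPmem] at hu2
            obtain ⟨h2K, hq2⟩ := hu2
            have h3 : (A' ^ l) (J.mkQ ⟨u, huK⟩) ∈ W' ((l : ℤ) + 1) := by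
              rw [hApow]
              convert hq2 using 3
            have h4 := hinj' _ hq h3
            rw [hWc_mid _ (by omega) (by omega), hPmem]
            exact ⟨huK, h4⟩
        · by_cases hl2 : l = m + 1
          · subst hl2
            have hc : ((m + 1 : ℕ) : ℤ) = (m : ℤ) + 1 := by push_cast; ring
            constructor
            · intro v hv
              rw [hc, hWcI] at hv
              obtain ⟨u, rfl⟩ := hv
              refine ⟨u, ?_, ?_⟩
              · rw [hWc_top _ (by omega)]; trivial
              · rw [sub_self]
                exact zero_mem _
            · intro u hu hu2
              rw [hc] at hu2
              rw [hWc_bot _ (by omega), Submodule.mem_bot] at hu2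
              rw [show -((m + 1 : ℕ) : ℤ) + 1 = -(m : ℤ) by push_cast; ring, hWcK]
              exact hu2
          · have hl3 : m + 2 ≤ l := by omega
            have hAl : A ^ l = 0 := by
              obtain ⟨k, rfl⟩ : ∃ k, l = (m + 2) + k := ⟨l - (m + 2), by omega⟩
              rw [pow_add, hA, zero_mul]
            constructor
            · intro v hv
              rw [hWc_bot _ (by omega), Submodule.mem_bot] at hv
              refine ⟨0, ?_, ?_⟩
              · rw [hWc_top _ (by omega)]; trivial
              · rw [hv, map_zero, sub_zero]
                exact zero_mem _
            · intro u hu _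
              rw [hWc_top _ (by omega)]; trivial
      -- Assemble existence
      have hWcD : IsDeligneFiltration A Wc := by
        refine ⟨hdec, ⟨(m : ℤ) + 2, ?_, ?_⟩, hdeg, hgr⟩
        · intro i hi; exact hWc_top i (by omega)
        · intro i hi; exact hWc_bot i (by omega)
      -- Uniqueness
      refine ⟨Wc, hWcD, ?_⟩
      intro W hW
      -- boundary values of W
      have hWt : ∀ i : ℤ, i ≤ -(m : ℤ) - 1 → W i = ⊤ := fun i hi =>
        top_of hW hA i (by push_cast; omega)
      have hWb : ∀ i : ℤ, (m : ℤ) + 1 < i → W i = ⊥ := fun i hi =>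
        bot_of hW hA i (by push_cast; omega)
      have hWK : W (-(m : ℤ)) = K := by
        have := ker_eq hW (m := m + 1) hA
        rw [show (1 : ℤ) - ((m + 1 : ℕ) : ℤ) = -(m : ℤ) by push_cast; ring] at this
        exact this
      have hWI : W ((m : ℤ) + 1) = I := by
        have := range_eq hW (m := m + 1) hA
        rw [show (((m + 1 : ℕ) : ℤ)) = (m : ℤ) + 1 by push_cast; ring] at this
        exact this
      have hWleK : ∀ i : ℤ, -(m : ℤ) ≤ i → W i ≤ K := fun i hi => hWK ▸ hW.1 _ _ hi
      have hIleW : ∀ i : ℤ, i ≤ (m : ℤ) + 1 → I ≤ W i := fun i hi => hWI ▸ hW.1 _ _ hi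
      -- induced filtration on the quotient
      set W'' : ℤ → Submodule F (K ⧸ J) := fun i => ((W i).comap K.subtype).map J.mkQ
        with hW''def
      have hW''t : ∀ i : ℤ, i ≤ -(m : ℤ) → W'' i = ⊤ := by
        intro i hi
        have h1 : (W i).comap K.subtype = ⊤ := by
          rw [Submodule.eq_top_iff']
          intro x
          rw [Submodule.mem_comap]
          exact (hWK ▸ hW.1 _ _ hi : K ≤ W i) x.2
        rw [hW''def]
        simp only [h1, Submodule.map_top, Submodule.range_mkQ]
      have hW''b : ∀ i : ℤ, (m : ℤ) + 1 ≤ i → W'' i = ⊥ := by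
        intro i hi
        have h1 : (W i).comap K.subtype ≤ J := by
          intro x hx
          rw [Submodule.mem_comap] at hx
          exact (hJmem x).mpr (hWI ▸ hW.1 _ _ hi hx)
        rw [hW''def]
        simp only []
        rw [← le_bot_iff]
        refine (Submodule.map_mono h1).trans ?_
        rw [Submodule.map_le_iff_le_comap, Submodule.comap_bot, Submodule.ker_mkQ]
      have hW''mem : ∀ (i : ℤ) (q : K ⧸ J), q ∈ W'' i ↔ ∃ x : K, (x : V) ∈ W i ∧ J.mkQ x = q := by
        intro i q
        rw [hW''def]
        simp only [Submodule.mem_map, Submodule.mem_comap]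
        rfl
      have hW''D : IsDeligneFiltration A' W'' := by
        refine ⟨?_, ⟨(m : ℤ) + 1, ?_, ?_⟩, ?_, ?_⟩
        · intro i j hij
          exact Submodule.map_mono (Submodule.comap_mono (hW.1 i j hij))
        · intro i hi; exact hW''t i (by omega)
        · intro i hi; exact hW''b i hi
        · intro i q hq
          rw [Submodule.mem_map] at hq
          obtain ⟨y, hy, rfl⟩ := hq
          rw [hW''mem] at hy
          obtain ⟨x, hx, rfl⟩ := hy
          rw [hApow1 ↑x x.2]
          rw [hW''mem]
          exact ⟨⟨A ↑x, hAK ↑x x.2⟩, hW.2.2.1 i (Submodule.mem_map_of_mem hx), rfl⟩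
        · intro l
          by_cases hl : l ≤ m
          · constructor
            · intro q hq
              rw [hW''mem] at hq
              obtain ⟨x, hx, rfl⟩ := hq
              obtain ⟨u, hu1, hu2⟩ := (hW.2.2.2 l).1 ↑x hx
              have huK : u ∈ K := hWleK (-(l : ℤ)) (by omega) hu1
              refine ⟨J.mkQ ⟨u, huK⟩, ?_, ?_⟩
              · rw [hW''mem]
                exact ⟨⟨u, huK⟩, hu1, rfl⟩
              · have hsubK : (x : V) - (A ^ l) u ∈ K := K.sub_mem x.2 (hAKpow l u huK)
                have heq : J.mkQ x - (A' ^ l) (J.mkQ ⟨u, huK⟩) = J.mkQ ⟨↑x - (A ^ l) u, hsubK⟩ := by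
                  rw [hApow, ← map_sub]
                  exact congrArg _ (Subtype.ext (by simp))
                rw [heq, hW''mem]
                exact ⟨_, hu2, rfl⟩
            · intro q hq hq2
              rw [hW''mem] at hq
              obtain ⟨x, hx, rfl⟩ := hq
              rw [hApow, hW''mem] at hq2
              obtain ⟨y, hy, hy2⟩ := hq2
              have hd : (y : V) - (A ^ l) ↑x ∈ I := by
                rw [Submodule.mkQ_apply, Submodule.mkQ_apply, Submodule.Quotient.eq] at hy2
                have h7 := (hJmem _).mp hy2
                rwa [AddSubgroupClass.coe_sub] at h7
              have hAlx : (A ^ l) ↑x ∈ W ((l : ℤ) + 1) := by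
                have h5 : (A ^ l) ↑x = ↑y - (↑y - (A ^ l) ↑x) := by abel
                rw [h5]
                exact (W _).sub_mem hy (hIleW _ (by omega) hd)
              have h6 := (hW.2.2.2 l).2 ↑x hx hAlx
              rw [hW''mem]
              exact ⟨x, h6, rfl⟩
          · have hlm : m + 1 ≤ l := by omega
            have hAl : A' ^ l = 0 := by
              obtain ⟨k, rfl⟩ : ∃ k, l = (m + 1) + k := ⟨l - (m + 1), by omega⟩
              rw [pow_add, hA'nil, zero_mul]
            constructor
            · intro q hq
              rw [hW''b _ (by omega), Submodule.mem_bot] at hq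
              refine ⟨0, ?_, ?_⟩
              · rw [hW''t _ (by omega)]; trivial
              · rw [hq, map_zero, sub_zero]
                exact zero_mem _
            · intro q hq _
              rw [hW''t _ (by omega)]; trivial
      -- conclude W = Wc
      have hW''W' := hW'u W'' hW''D
      funext i
      by_cases hi : i ≤ -(m : ℤ) - 1
      · rw [hWt _ hi, hWc_top _ hi]
      by_cases hi2 : (m : ℤ) + 1 < i
      · rw [hWb _ hi2, hWc_bot _ hi2]
      · push_neg at hi hi2
        rw [hWc_mid _ (by omega) hi2, ← hW''W']
        rw [hPdef]
        simp only []
        rw [hW''def]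
        simp only []
        rw [Submodule.comap_map_eq, Submodule.ker_mkQ, Submodule.map_sup,
          Submodule.map_comap_subtype, hJdef, Submodule.map_comap_subtype]
        rw [inf_eq_right.mpr (hWleK i (by omega)), inf_eq_right.mpr hIK,
          sup_eq_left.mpr (hIleW i (by omega))]
end Key

/-- Deligne: a nilpotent operator on a finite-dimensional vector space admits a
unique Deligne (weight) filtration. -/
theorem exists_unique_deligne_filtration
    (F : Type*) [Field F] (V : Type*) [AddCommGroup V] [Module F V]
    [FiniteDimensional F V] (A : Module.End F V) (hA : IsNilpotent A) :
    ∃! W : ℤ → Submodule F V, IsDeligneFiltration A W := by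
  obtain ⟨n, hn⟩ := hA
  exact deligne_key n A hn
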